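/- Let z be a nonzero real number, let a be a real number that is not a nonpositive integer, and let d ≥ 1 be an integer. Let c(d) be the d-th iterated derivative at 0 of f_{a,z}(x) = exp(−z − (a−1)x + z·e^x). Then there exists a polynomial q with real coefficients such that for every integer n ≥ 0, ∑_{k=0}^{n−1} (k^d − c(d))·z^k / a^{(k)} = q(n)·z^n / a^{(n)} − q(0). -/

import Mathlib

/-- Rising factorial `a^{(k)} = a (a+1) ⋯ (a+k-1)` of a real number. -/
def risingFactorial (a : ℝ) : ℕ → ℝ
  | 0 => 1
  | k + 1 => risingFactorial a k * (a + k)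

open scoped ContDiff
open Polynomial Finset

namespace Stmt6Aux

noncomputable def f (z a : ℝ) : ℝ → ℝ := fun x : ℝ => Real.exp (-z - (a - 1) * x + z * Real.exp x)

lemma contDiff_f (z a : ℝ) : ContDiff ℝ ∞ (f z a) := by
  apply Real.contDiff_exp.comp
  fun_prop

lemma f_zero (z a : ℝ) : f z a 0 = 1 := by simp [f]

lemma deriv_f (z a : ℝ) : deriv (f z a) = fun x => (1 - a) * f z a x + z * (Real.exp x * f z a x) := by
  funext x
  have hu : HasDerivAt (fun x : ℝ => -z - (a - 1) * x + z * Real.exp x)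
      (-(a-1) + z * Real.exp x) x := by
    have h1 : HasDerivAt (fun x : ℝ => -z - (a - 1) * x) (-(a-1)) x := by
      simpa using ((hasDerivAt_id x).const_mul (a-1)).const_sub (-z)
    exact h1.add ((Real.hasDerivAt_exp x).const_mul z)
  have H : HasDerivAt (f z a)
      (Real.exp (-z - (a - 1) * x + z * Real.exp x) * (-(a-1) + z * Real.exp x)) x :=
    (Real.hasDerivAt_exp _).comp x hu
  rw [H.deriv]
  show Real.exp _ * _ = (1-a) * f z a x + z * (Real.exp x * f z a x)
  unfold f
  ring


lemma iteratedDeriv_add' {n : ℕ} {g h : ℝ → ℝ} (hg : ContDiff ℝ ∞ g) (hh : ContDiff ℝ ∞ h)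
    (x : ℝ) : iteratedDeriv n (fun y => g y + h y) x = iteratedDeriv n g x + iteratedDeriv n h x := by
  have hg' : ContDiffOn ℝ n g Set.univ :=
    (hg.of_le (by exact_mod_cast OrderTop.le_top _ : (n : WithTop ℕ∞) ≤ ∞)).contDiffOn
  have hh' : ContDiffOn ℝ n h Set.univ :=
    (hh.of_le (by exact_mod_cast OrderTop.le_top _ : (n : WithTop ℕ∞) ≤ ∞)).contDiffOn
  have := iteratedDerivWithin_add (Set.mem_univ x) uniqueDiffOn_univ (hg'.contDiffWithinAt (Set.mem_univ x)) (hh'.contDiffWithinAt (Set.mem_univ x))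
  simpa [iteratedDerivWithin_univ, Pi.add_def] using this

lemma contDiff_deriv {g : ℝ → ℝ} (hg : ContDiff ℝ ∞ g) : ContDiff ℝ ∞ (deriv g) :=
  (contDiff_infty_iff_deriv.mp hg).2

lemma choose_shift (n : ℕ) (u : ℕ → ℝ) :
    ∑ i ∈ range (n+1), (n.choose i : ℝ) * (u i + u (i+1))
      = ∑ i ∈ range (n+2), ((n+1).choose i : ℝ) * u i := by
  have key : ∑ i ∈ range (n+1), (n.choose i : ℝ) * u i
      = u 0 + ∑ i ∈ range (n+1), (n.choose (i+1) : ℝ) * u (i+1) := by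
    rw [Finset.sum_range_succ' (fun i => (n.choose i : ℝ) * u i) n]
    rw [Finset.sum_range_succ (fun i => (n.choose (i+1) : ℝ) * u (i+1)) n]
    simp [Nat.choose_succ_self]
    ring
  rw [Finset.sum_range_succ' (fun i => ((n+1).choose i : ℝ) * u i) (n+1)]
  simp only [Nat.choose_succ_succ, Nat.cast_add, Nat.choose_zero_right, Nat.cast_one]
  calc ∑ i ∈ range (n+1), (n.choose i : ℝ) * (u i + u (i+1))
      = (∑ i ∈ range (n+1), (n.choose i : ℝ) * u i)
        + ∑ i ∈ range (n+1), (n.choose i : ℝ) * u (i+1) := by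
        rw [← Finset.sum_add_distrib]; apply Finset.sum_congr rfl; intros; ring
    _ = _ := by
        rw [key, add_assoc, ← Finset.sum_add_distrib, add_comm]
        simp only [one_mul]
        congr 1
        apply Finset.sum_congr rfl; intros
        push_cast
        ring

lemma exp_leibniz : ∀ (n : ℕ) (g : ℝ → ℝ), ContDiff ℝ ∞ g →
    iteratedDeriv n (fun x => Real.exp x * g x) 0
      = ∑ i ∈ Finset.range (n + 1), (n.choose i : ℝ) * iteratedDeriv i g 0 := by
  intro n
  induction n with
  | zero => intro g hg; simp
  | succ n ih =>
    intro g hg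
    have hgd : ContDiff ℝ ∞ (deriv g) := contDiff_deriv hg
    rw [iteratedDeriv_succ']
    have hderiv : deriv (fun x => Real.exp x * g x)
        = fun x => Real.exp x * (g x + deriv g x) := by
      funext x
      have h1 : HasDerivAt (fun x => Real.exp x * g x)
          (Real.exp x * g x + Real.exp x * deriv g x) x :=
        (Real.hasDerivAt_exp x).mul ((hg.differentiable (by simp)) x).hasDerivAt
      rw [h1.deriv]; ring
    rw [hderiv, ih _ (hg.add hgd)]
    have hpt : ∀ i : ℕ, iteratedDeriv i (fun y => g y + deriv g y) 0
        = iteratedDeriv i g 0 + iteratedDeriv (i+1) g 0 := by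
      intro i
      rw [iteratedDeriv_add' hg hgd, iteratedDeriv_succ']
    calc ∑ i ∈ range (n+1), (n.choose i : ℝ) * iteratedDeriv i (fun y => g y + deriv g y) 0
        = ∑ i ∈ range (n+1), (n.choose i : ℝ) * (iteratedDeriv i g 0 + iteratedDeriv (i+1) g 0) := by
          apply Finset.sum_congr rfl; intro i _; rw [hpt]
      _ = _ := choose_shift n _


noncomputable def cc (z a : ℝ) (d : ℕ) : ℝ := iteratedDeriv d (f z a) 0

lemma cc_zero (z a : ℝ) : cc z a 0 = 1 := by
  rw [cc, iteratedDeriv_zero, f_zero]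

lemma iteratedDeriv_const_mul' {n : ℕ} {g : ℝ → ℝ} (hg : ContDiff ℝ ∞ g) (r : ℝ) (x : ℝ) :
    iteratedDeriv n (fun y => r * g y) x = r * iteratedDeriv n g x := by
  have hg' : ContDiffOn ℝ n g Set.univ :=
    (hg.of_le (by exact_mod_cast OrderTop.le_top _ : (n : WithTop ℕ∞) ≤ ∞)).contDiffOn
  have := iteratedDerivWithin_const_mul (Set.mem_univ x) uniqueDiffOn_univ r (hg'.contDiffWithinAt (Set.mem_univ x))
  simpa [iteratedDerivWithin_univ] using this

lemma cc_rec (z a : ℝ) (d : ℕ) :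
    cc z a (d+1) = (1-a) * cc z a d + z * ∑ i ∈ range (d+1), (d.choose i : ℝ) * cc z a i := by
  have hf := contDiff_f z a
  have hexp : ContDiff ℝ ∞ (fun x => Real.exp x * f z a x) :=
    Real.contDiff_exp.mul hf
  have : cc z a (d+1) = iteratedDeriv d (deriv (f z a)) 0 := by
    rw [cc, iteratedDeriv_succ']
  rw [this, deriv_f]
  have h1 : iteratedDeriv d (fun x => (1-a) * f z a x + z * (Real.exp x * f z a x)) 0
      = iteratedDeriv d (fun x => (1-a) * f z a x) 0
        + iteratedDeriv d (fun x => z * (Real.exp x * f z a x)) 0 :=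
    iteratedDeriv_add' (hf.const_smul (1-a)) (hexp.const_smul z) 0
  rw [h1, iteratedDeriv_const_mul' hf, iteratedDeriv_const_mul' hexp,
    exp_leibniz d (f z a) hf]
  rfl

/-- the moment functional -/
noncomputable def lam (c : ℕ → ℝ) (p : ℝ[X]) : ℝ := p.sum fun i ci => ci * c i

lemma lam_add (c : ℕ → ℝ) (p q : ℝ[X]) : lam c (p + q) = lam c p + lam c q :=
  Polynomial.sum_add_index p q _ (by intro i; simp) (by intro i b1 b2; ring)

lemma lam_monomial (c : ℕ → ℝ) (n : ℕ) (b : ℝ) : lam c (monomial n b) = b * c n :=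
  Polynomial.sum_monomial_index b _ (by simp)

lemma lam_C_mul (c : ℕ → ℝ) (b : ℝ) (p : ℝ[X]) : lam c (C b * p) = b * lam c p := by
  induction p using Polynomial.induction_on' with
  | add p q hp hq => rw [mul_add, lam_add, hp, hq, lam_add]; ring
  | monomial n r => rw [C_mul_monomial, lam_monomial, lam_monomial]; ring

lemma lam_zero (c : ℕ → ℝ) : lam c 0 = 0 := Polynomial.sum_zero_index _

lemma lam_sum (c : ℕ → ℝ) {ι : Type*} (s : Finset ι) (g : ι → ℝ[X]) :
    lam c (∑ i ∈ s, g i) = ∑ i ∈ s, lam c (g i) := by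
  classical
  induction s using Finset.induction_on with
  | empty => simp [lam_zero]
  | @insert x s' hx ih => rw [Finset.sum_insert hx, lam_add, ih, Finset.sum_insert hx]

lemma lam_X_pow (c : ℕ → ℝ) (n : ℕ) : lam c (X ^ n) = c n := by
  rw [X_pow_eq_monomial, lam_monomial, one_mul]

lemma X_add_one_pow (n : ℕ) :
    ((X + C 1 : ℝ[X]) ^ n) = ∑ j ∈ range (n+1), C ((n.choose j : ℝ)) * X ^ j := by
  rw [add_pow]
  apply Finset.sum_congr rfl
  intro j _
  simp only [C_1, one_pow, Polynomial.C_eq_natCast]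
  ring

lemma lam_key (z a : ℝ) (c : ℕ → ℝ)
    (hc : ∀ n, c (n+1) = (1-a) * c n + z * ∑ i ∈ range (n+1), (n.choose i : ℝ) * c i)
    (p : ℝ[X]) :
    lam c ((X + C (a-1)) * p) = z * lam c (p.comp (X + C 1)) := by
  induction p using Polynomial.induction_on' with
  | add p q hp hq => rw [mul_add, lam_add, hp, hq, add_comp, lam_add]; ring
  | monomial n b =>
    rw [← C_mul_X_pow_eq_monomial]
    have hL : (X + C (a-1)) * (C b * X ^ n)
        = C b * X ^ (n+1) + C ((a-1) * b) * X ^ n := by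
      rw [map_mul]; ring
    have hR : ((C b * X ^ n).comp (X + C 1))
        = ∑ j ∈ range (n+1), C (b * (n.choose j : ℝ)) * X ^ j := by
      rw [mul_comp, C_comp, pow_comp, X_comp, X_add_one_pow, Finset.mul_sum]
      apply Finset.sum_congr rfl; intro j _; rw [map_mul]; ring
    rw [hL, hR, lam_add, lam_C_mul, lam_C_mul, lam_X_pow, lam_X_pow, lam_sum]
    have hterm : ∀ j ∈ range (n+1), lam c (C (b * (n.choose j:ℝ)) * X ^ j)
        = b * ((n.choose j:ℝ) * c j) := by
      intro j _; rw [lam_C_mul, lam_X_pow]; ring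
    rw [Finset.sum_congr rfl hterm, hc n]
    rw [show ∑ j ∈ range (n+1), b * ((n.choose j:ℝ) * c j)
        = b * ∑ j ∈ range (n+1), (n.choose j:ℝ) * c j from (Finset.mul_sum _ _ _).symm]
    ring


/-- membership in the image submodule -/
def Good (z a : ℝ) (p : ℝ[X]) : Prop :=
  ∃ q : ℝ[X], ∃ γ : ℝ, C z * q.comp (X + C 1) - (X + C a) * q + C γ * (X + C a) = p

lemma good_add {z a : ℝ} {p₁ p₂ : ℝ[X]} (h₁ : Good z a p₁) (h₂ : Good z a p₂) :
    Good z a (p₁ + p₂) := by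
  obtain ⟨q₁, γ₁, hq₁⟩ := h₁
  obtain ⟨q₂, γ₂, hq₂⟩ := h₂
  refine ⟨q₁ + q₂, γ₁ + γ₂, ?_⟩
  rw [add_comp]
  rw [map_add (f := C)]
  linear_combination hq₁ + hq₂

lemma good_C_mul {z a : ℝ} (r : ℝ) {p : ℝ[X]} (h : Good z a p) : Good z a (C r * p) := by
  obtain ⟨q, γ, hq⟩ := h
  refine ⟨C r * q, r * γ, ?_⟩
  rw [mul_comp, C_comp, map_mul (f := C)]
  linear_combination (C r : ℝ[X]) * hq

lemma good_sum {z a : ℝ} {ι : Type*} (s : Finset ι) (g : ι → ℝ[X])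
    (h : ∀ i ∈ s, Good z a (g i)) : Good z a (∑ i ∈ s, g i) := by
  classical
  induction s using Finset.induction_on with
  | empty => exact ⟨0, 0, by simp⟩
  | @insert x s' hx ih =>
    rw [Finset.sum_insert hx]
    exact good_add (h x (Finset.mem_insert_self _ _))
      (ih fun i hi => h i (Finset.mem_insert_of_mem hi))

lemma good_one {z a : ℝ} (hz : z ≠ 0) : Good z a (1 : ℝ[X]) := by
  refine ⟨C (1/z), 1/z, ?_⟩
  rw [C_comp]
  have : (C z : ℝ[X]) * C (1/z) = 1 := by
    rw [← map_mul]
    rw [mul_one_div_cancel hz]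
    exact map_one C
  linear_combination this

lemma X_add_one_pow' (n : ℕ) :
    ((X + C 1 : ℝ[X]) ^ n) = ∑ j ∈ range (n+1), C ((n.choose j : ℝ)) * X ^ j := by
  rw [add_pow]
  apply Finset.sum_congr rfl
  intro j _
  simp only [C_1, one_pow, Polynomial.C_eq_natCast]
  ring

lemma good_shift {z a : ℝ} (n : ℕ) (h : Good z a (C z * (X + C 1) ^ n)) :
    Good z a ((X + C a) * X ^ n) := by
  obtain ⟨q, γ, hq⟩ := h
  refine ⟨q - X ^ n, γ, ?_⟩
  rw [sub_comp, pow_comp, X_comp]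
  linear_combination hq

lemma good_X_pow {z a : ℝ} (hz : z ≠ 0) : ∀ n : ℕ, Good z a (X ^ n) := by
  intro n
  induction n using Nat.strong_induction_on with
  | _ n ih =>
    match n with
    | 0 => simpa using good_one (a := a) hz
    | Nat.succ m =>
      have hXa : Good z a ((X + C a) * X ^ m) := by
        apply good_shift
        rw [X_add_one_pow', Finset.mul_sum]
        apply good_sum
        intro j hj
        rw [show (C z : ℝ[X]) * (C (m.choose j : ℝ) * X ^ j)
            = C (z * (m.choose j : ℝ)) * X ^ j by rw [map_mul]; ring]
        exact good_C_mul _ (ih j (lt_of_lt_of_le (Finset.mem_range.mp hj) le_rfl))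
      have hlow : Good z a (C (-a) * X ^ m) :=
        good_C_mul _ (ih m (Nat.lt_succ_self m))
      have := good_add hXa hlow
      have heq : (X + C a) * X ^ m + C (-a) * X ^ m = X ^ (m+1) := by
        rw [map_neg (f := C)]
        ring
      rwa [heq] at this

lemma good_main {z a : ℝ} (hz : z ≠ 0) (d : ℕ) :
    ∃ q : ℝ[X], ∃ γ : ℝ,
      C z * q.comp (X + C 1) - (X + C a) * q = (X + C a) * (X ^ d - C γ) := by
  obtain ⟨q, γ, hq⟩ := by
    apply good_shift (z := z) (a := a) d
    rw [X_add_one_pow', Finset.mul_sum]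
    apply good_sum
    intro j hj
    rw [show (C z : ℝ[X]) * (C (d.choose j : ℝ) * X ^ j)
        = C (z * (d.choose j : ℝ)) * X ^ j by rw [map_mul]; ring]
    exact good_C_mul _ (good_X_pow hz j)
  exact ⟨q, γ, by linear_combination hq⟩


lemma comp_shift_cancel (q : ℝ[X]) : (q.comp (X + C 1)).comp (X - C 1) = q := by
  rw [comp_assoc]
  have : ((X + C 1 : ℝ[X]).comp (X - C 1)) = X := by
    rw [add_comp, X_comp, C_comp]; ring
  rw [this, comp_X]

lemma comp_shift_cancel' (q : ℝ[X]) : (q.comp (X - C 1)).comp (X + C 1) = q := by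
  rw [comp_assoc]
  have : ((X - C 1 : ℝ[X]).comp (X + C 1)) = X := by
    rw [sub_comp, X_comp, C_comp]; ring
  rw [this, comp_X]

lemma gamma_eq (z a : ℝ) (hz : z ≠ 0) (c : ℕ → ℝ) (hc0 : c 0 = 1)
    (hc : ∀ n, c (n+1) = (1-a) * c n + z * ∑ i ∈ range (n+1), (n.choose i : ℝ) * c i)
    (d : ℕ) (q : ℝ[X]) (γ : ℝ)
    (hq : C z * q.comp (X + C 1) - (X + C a) * q = (X + C a) * (X ^ d - C γ)) :
    γ = c d := by
  have h1 := congrArg (fun p : ℝ[X] => p.comp (X - C 1)) hq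
  simp only [sub_comp, mul_comp, add_comp, X_comp, C_comp, pow_comp,
    comp_shift_cancel] at h1
  -- h1 : C z * q - (X - C 1 + C a) * q.comp (X - C 1)
  --        = (X - C 1 + C a) * ((X - C 1) ^ d - C γ)
  set p : ℝ[X] := q.comp (X - C 1) + (X - C 1) ^ d - C γ with hp
  have h3 : C z * q = (X + C (a-1)) * p := by
    have hC : (C (a-1) : ℝ[X]) = C a - C 1 := map_sub _ _ _
    rw [hC, hp]
    linear_combination h1
  have h4 : p.comp (X + C 1) = q + X ^ d - C γ := by
    rw [hp, sub_comp, add_comp, pow_comp, C_comp, comp_shift_cancel']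
    have : ((X - C 1 : ℝ[X]).comp (X + C 1)) = X := by
      rw [sub_comp, X_comp, C_comp]; ring
    rw [this]
  have h5 := lam_key z a c hc p
  rw [← h3, h4, lam_C_mul] at h5
  have h6 : q + X ^ d - C γ = q + (X ^ d + C (-γ) * X ^ 0) := by
    rw [map_neg]; ring
  rw [h6, lam_add, lam_add, lam_C_mul, lam_X_pow, lam_X_pow, hc0] at h5
  have : z * (c d + -γ * 1) = 0 := by linarith [h5]
  have h7 : c d - γ = 0 := by
    have := mul_eq_zero.mp this
    rcases this with h | h
    · exact absurd h hz
    · linarith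
  linarith


lemma rf_ne {a : ℝ} (ha : ∀ m : ℕ, a ≠ -(m : ℝ)) : ∀ n, risingFactorial a n ≠ 0 := by
  intro n
  induction n with
  | zero => norm_num [risingFactorial]
  | succ n ih =>
    show risingFactorial a n * (a + n) ≠ 0
    refine mul_ne_zero ih ?_
    intro h
    exact ha n (by linarith)


end Stmt6Aux

open Stmt6Aux in
theorem stmt_6 (z a : ℝ) (hz : z ≠ 0) (ha : ∀ m : ℕ, a ≠ -(m : ℝ)) (d : ℕ) (hd : 1 ≤ d) :
    ∃ q : Polynomial ℝ, ∀ n : ℕ,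
      ∑ k ∈ Finset.range n,
          (((k : ℝ) ^ d -
              iteratedDeriv d (fun x : ℝ => Real.exp (-z - (a - 1) * x + z * Real.exp x)) 0) *
            z ^ k / risingFactorial a k) =
        q.eval (n : ℝ) * z ^ n / risingFactorial a n - q.eval 0 := by
  obtain ⟨q, γ, hq⟩ := good_main (a := a) hz d
  have hγ : γ = cc z a d := gamma_eq z a hz (cc z a) (cc_zero z a) (cc_rec z a) d q γ hq
  subst hγ
  refine ⟨q, ?_⟩
  have hcd : iteratedDeriv d (fun x : ℝ => Real.exp (-z - (a - 1) * x + z * Real.exp x)) 0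
      = cc z a d := rfl
  intro n
  rw [hcd]
  induction n with
  | zero => simp [risingFactorial]
  | succ n ih =>
    have hA1 : risingFactorial a (n+1) = risingFactorial a n * (a + n) := rfl
    have hAn : risingFactorial a n ≠ 0 := rf_ne ha n
    have han : a + (n : ℝ) ≠ 0 := by
      intro h; exact ha n (by linarith)
    have heval := congrArg (Polynomial.eval (n : ℝ)) hq
    simp only [eval_mul, eval_add, eval_sub, eval_comp, eval_C, eval_X, eval_pow] at heval
    rw [Finset.sum_range_succ, ih, hA1]
    push_cast
    field_simp
    ring_nf
    ring_nf at heval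
    linear_combination (-(z ^ n)) * heval
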